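/- Let ω ∈ ℝ³ with θ = ‖ω‖ ≠ 0 and Ω = [ω]^∧. Then for every t ∈ ℝ, ∫₀ᵗ ∫₀ˢ exp(τΩ) dτ ds = (t²/2)·I₃ + ((θt − sin(θt))/θ³)·Ω + ((θ²t²/2 − 1 + cos(θt))/θ⁴)·Ω², where integrals of matrix-valued functions are taken entrywise. -/

import Mathlib

open Matrix

/-- The hat map `[ω]^∧`: the skew-symmetric matrix satisfying `([ω]^∧) x = ω × x`. -/
noncomputable def hat (ω : EuclideanSpace ℝ (Fin 3)) : Matrix (Fin 3) (Fin 3) ℝ :=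
  !![0, -ω 2, ω 1; ω 2, 0, -ω 0; -ω 1, ω 0, 0]

/-- The 3×2 matrix with the two given columns. -/
noncomputable def cols (u w : Fin 3 → ℝ) : Matrix (Fin 3) (Fin 2) ℝ :=
  Matrix.of fun i j => ![u i, w i] j

section Aux

lemma hat_cube (ω : EuclideanSpace ℝ (Fin 3)) (θ : ℝ) (hθ : θ = ‖ω‖) :
    (hat ω) ^ 3 = (-(θ ^ 2)) • hat ω := by
  have h2 : θ ^ 2 = ω 0 ^ 2 + ω 1 ^ 2 + ω 2 ^ 2 := by
    rw [hθ, EuclideanSpace.norm_eq, Real.sq_sqrt (by positivity)]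
    simp only [Fin.sum_univ_three, Real.norm_eq_abs, sq_abs]
  ext i j
  fin_cases i <;> fin_cases j <;>
    simp [hat, pow_succ, Matrix.mul_apply, Fin.sum_univ_three, h2] <;> ring

variable {θ : ℝ}

lemma dsin (θ u : ℝ) : HasDerivAt (fun v => Real.sin (θ * v)) (θ * Real.cos (θ * u)) u := by
  have h := (Real.hasDerivAt_sin (θ * u)).comp u ((hasDerivAt_id u).const_mul θ)
  simpa [mul_comm, Function.comp_def] using h

lemma dcos (θ u : ℝ) : HasDerivAt (fun v => Real.cos (θ * v)) (-(θ * Real.sin (θ * u))) u := by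
  have h := (Real.hasDerivAt_cos (θ * u)).comp u ((hasDerivAt_id u).const_mul θ)
  simpa [mul_comm, Function.comp_def] using h

lemma d1 (hθ0 : θ ≠ 0) (u : ℝ) :
    HasDerivAt (fun v => Real.sin (θ * v) / θ) (Real.cos (θ * u)) u := by
  have h := (dsin θ u).div_const θ
  refine h.congr_deriv ?_
  field_simp
  try ring

lemma d2 (hθ0 : θ ≠ 0) (u : ℝ) :
    HasDerivAt (fun v => (1 - Real.cos (θ * v)) / θ ^ 2) (Real.sin (θ * u) / θ) u := by
  have h := ((hasDerivAt_const u (1:ℝ)).sub (dcos θ u)).div_const (θ ^ 2)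
  refine h.congr_deriv ?_
  field_simp
  try ring

lemma d3 (hθ0 : θ ≠ 0) (u : ℝ) :
    HasDerivAt (fun v => (θ * v - Real.sin (θ * v)) / θ ^ 3)
      ((1 - Real.cos (θ * u)) / θ ^ 2) u := by
  have h := (((hasDerivAt_id u).const_mul θ).sub (dsin θ u)).div_const (θ ^ 3)
  refine h.congr_deriv ?_
  field_simp
  try ring

lemma d4 (hθ0 : θ ≠ 0) (u : ℝ) :
    HasDerivAt (fun v => (θ ^ 2 * v ^ 2 / 2 - 1 + Real.cos (θ * v)) / θ ^ 4)
      ((θ * u - Real.sin (θ * u)) / θ ^ 3) u := by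
  have hsq : HasDerivAt (fun v : ℝ => θ ^ 2 * v ^ 2 / 2) (θ ^ 2 * u) u := by
    have h := (((hasDerivAt_pow 2 u)).const_mul (θ ^ 2)).div_const 2
    refine h.congr_deriv ?_
    ring
  have h := ((hsq.sub (hasDerivAt_const u (1:ℝ))).add (dcos θ u)).div_const (θ ^ 4)
  refine h.congr_deriv ?_
  field_simp
  try ring

attribute [local instance] Matrix.linftyOpNormedAddCommGroup Matrix.linftyOpNormedRing
  Matrix.linftyOpNormedAlgebra

lemma rodrigues (ω : EuclideanSpace ℝ (Fin 3)) (hθ : θ = ‖ω‖) (hθ0 : θ ≠ 0) (τ : ℝ) :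
    NormedSpace.exp (τ • hat ω) =
      1 + (Real.sin (θ * τ) / θ) • hat ω + ((1 - Real.cos (θ * τ)) / θ ^ 2) • (hat ω) ^ 2 := by
  set Ω := hat ω with hΩ
  set G : ℝ → Matrix (Fin 3) (Fin 3) ℝ :=
    fun u => 1 + (Real.sin (θ * u) / θ) • Ω + ((1 - Real.cos (θ * u)) / θ ^ 2) • Ω ^ 2 with hG
  have hGd : ∀ u, HasDerivAt G
      (Real.cos (θ * u) • Ω + (Real.sin (θ * u) / θ) • Ω ^ 2) u := fun u => by
    have h := ((hasDerivAt_const u (1 : Matrix (Fin 3) (Fin 3) ℝ)).add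
      ((d1 hθ0 u).smul_const Ω)).add ((d2 hθ0 u).smul_const (Ω ^ 2))
    exact h.congr_deriv (by simp) -- derivative of constant
  have key : ∀ u, Ω * G u = Real.cos (θ * u) • Ω + (Real.sin (θ * u) / θ) • Ω ^ 2 := by
    intro u
    have hc : Ω ^ 3 = (-(θ ^ 2)) • Ω := hat_cube ω θ hθ
    have h3 : Ω * Ω ^ 2 = Ω ^ 3 := (pow_succ' Ω 2).symm
    have hb : (1 - Real.cos (θ * u)) / θ ^ 2 * (-(θ ^ 2)) = -(1 - Real.cos (θ * u)) := by
      field_simp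
      try ring
    calc Ω * G u
        = Ω + (Real.sin (θ * u) / θ) • (Ω * Ω) +
            ((1 - Real.cos (θ * u)) / θ ^ 2) • (Ω * Ω ^ 2) := by
          simp [hG, mul_add, mul_smul_comm]
      _ = Ω + (Real.sin (θ * u) / θ) • Ω ^ 2 + (-(1 - Real.cos (θ * u))) • Ω := by
          rw [h3, hc, smul_smul, hb, ← pow_two]
      _ = Real.cos (θ * u) • Ω + (Real.sin (θ * u) / θ) • Ω ^ 2 := by
          module
  have hE : ∀ u : ℝ, HasDerivAt (fun v : ℝ => NormedSpace.exp ((-v) • Ω))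
      (-(NormedSpace.exp ((-u) • Ω) * Ω)) u := fun u => by
    have h := (hasDerivAt_exp_smul_const (𝕂 := ℝ) Ω (-u)).scomp u (hasDerivAt_neg u)
    exact h.congr_deriv (neg_one_smul ℝ _)
  set H : ℝ → Matrix (Fin 3) (Fin 3) ℝ := fun u => NormedSpace.exp ((-u) • Ω) * G u with hH
  have hHd : ∀ u, HasDerivAt H 0 u := by
    intro u
    have h := (hE u).mul (hGd u)
    have : -(NormedSpace.exp ((-u) • Ω) * Ω) * G u +
        NormedSpace.exp ((-u) • Ω) *
          (Real.cos (θ * u) • Ω + (Real.sin (θ * u) / θ) • Ω ^ 2) = 0 := by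
      rw [← key u, neg_mul, mul_assoc]
      abel
    rwa [this] at h
  have hconst : H τ = H 0 :=
    is_const_of_deriv_eq_zero (fun u => (hHd u).differentiableAt)
      (fun u => (hHd u).deriv) τ 0
  have hH0 : H 0 = 1 := by
    simp [hH, hG, NormedSpace.exp_zero]
  have hinv : NormedSpace.exp (τ • Ω) * NormedSpace.exp ((-τ) • Ω) = 1 := by
    refine (NormedSpace.exp_add_of_commute
      (by exact ((Commute.refl Ω).smul_left τ).smul_right (-τ))).symm.trans ?_
    simp [NormedSpace.exp_zero]
  calc NormedSpace.exp (τ • Ω)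
      = NormedSpace.exp (τ • Ω) * H τ := by rw [hconst, hH0, mul_one]
    _ = (NormedSpace.exp (τ • Ω) * NormedSpace.exp ((-τ) • Ω)) * G τ := by
        rw [hH, mul_assoc]
    _ = G τ := by rw [hinv, one_mul]

end Aux

/-- The double integral of the matrix exponential, taken entrywise. -/
theorem stmt18 (ω : EuclideanSpace ℝ (Fin 3)) (θ : ℝ) (hθ : θ = ‖ω‖) (hθ0 : θ ≠ 0)
    (Ω : Matrix (Fin 3) (Fin 3) ℝ) (hΩ : Ω = hat ω)
    (F : ℝ → Matrix (Fin 3) (Fin 3) ℝ)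
    (hF : ∀ s : ℝ, ∀ i j, F s i j = ∫ τ in (0 : ℝ)..s, NormedSpace.exp (τ • Ω) i j)
    (t : ℝ) :
    ∀ i j, (∫ s in (0 : ℝ)..t, F s i j) =
      ((t ^ 2 / 2) • (1 : Matrix (Fin 3) (Fin 3) ℝ)
        + ((θ * t - Real.sin (θ * t)) / θ ^ 3) • Ω
        + ((θ ^ 2 * t ^ 2 / 2 - 1 + Real.cos (θ * t)) / θ ^ 4) • Ω ^ 2) i j := by
  intro i j
  set A : ℝ := (1 : Matrix (Fin 3) (Fin 3) ℝ) i j with hA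
  set B : ℝ := Ω i j with hB
  set C : ℝ := (Ω ^ 2) i j with hC
  have hexp : ∀ τ : ℝ, NormedSpace.exp (τ • Ω) i j =
      A + (Real.sin (θ * τ) / θ) * B + ((1 - Real.cos (θ * τ)) / θ ^ 2) * C := by
    intro τ
    rw [hΩ, rodrigues ω hθ hθ0 τ]
    simp [hA, hB, hC, hΩ, Matrix.add_apply, Matrix.smul_apply, smul_eq_mul]
  -- inner integral
  have hFs : ∀ s : ℝ, F s i j =
      s * A + ((1 - Real.cos (θ * s)) / θ ^ 2) * B + ((θ * s - Real.sin (θ * s)) / θ ^ 3) * C := by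
    intro s
    rw [hF]
    have hg : ∀ u ∈ Set.uIcc (0:ℝ) s, HasDerivAt
        (fun v => v * A + ((1 - Real.cos (θ * v)) / θ ^ 2) * B +
          ((θ * v - Real.sin (θ * v)) / θ ^ 3) * C)
        (NormedSpace.exp (u • Ω) i j) u := by
      intro u _
      rw [hexp u]
      exact (((hasDerivAt_id u).mul_const A).add ((d2 hθ0 u).mul_const B)).add
        ((d3 hθ0 u).mul_const C) |>.congr_deriv (by ring)
    have hint : IntervalIntegrable (fun τ => NormedSpace.exp (τ • Ω) i j)
        MeasureTheory.volume 0 s := by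
      apply Continuous.intervalIntegrable
      have : (fun τ => NormedSpace.exp (τ • Ω) i j) =
          fun τ => A + (Real.sin (θ * τ) / θ) * B + ((1 - Real.cos (θ * τ)) / θ ^ 2) * C :=
        funext hexp
      rw [this]; fun_prop
    rw [intervalIntegral.integral_eq_sub_of_hasDerivAt hg hint]
    simp
  -- outer integral
  have hg2 : ∀ u ∈ Set.uIcc (0:ℝ) t, HasDerivAt
      (fun v => (v ^ 2 / 2) * A + ((θ * v - Real.sin (θ * v)) / θ ^ 3) * B +
        ((θ ^ 2 * v ^ 2 / 2 - 1 + Real.cos (θ * v)) / θ ^ 4) * C)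
      (F u i j) u := by
    intro u _
    rw [hFs u]
    have hq : HasDerivAt (fun v : ℝ => v ^ 2 / 2) u u := by
      have h := (hasDerivAt_pow 2 u).div_const 2
      refine h.congr_deriv ?_
      ring
    exact ((hq.mul_const A).add ((d3 hθ0 u).mul_const B)).add
      ((d4 hθ0 u).mul_const C) |>.congr_deriv (by ring)
  have hint2 : IntervalIntegrable (fun s => F s i j) MeasureTheory.volume 0 t := by
    apply Continuous.intervalIntegrable
    have : (fun s => F s i j) = fun s =>
        s * A + ((1 - Real.cos (θ * s)) / θ ^ 2) * B +
          ((θ * s - Real.sin (θ * s)) / θ ^ 3) * C := funext hFs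
    rw [this]; fun_prop
  rw [intervalIntegral.integral_eq_sub_of_hasDerivAt hg2 hint2]
  simp [hA, hB, hC, Matrix.add_apply, Matrix.smul_apply, smul_eq_mul]
  try ring
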